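/- Fix n ≥ 1. Define n×n real matrices S and T by S_{ij} = (-1)^{i+j-1} / ((i-1)!·(j-1)!·(i+j-1)) and T_{ij} = -(1/(i+j-1)) · C(n+i-1, i-1) · C(n+j-1, j-1) · (n!)² / ((n-i)!·(n-j)!), for 1 ≤ i,j ≤ n. Then S · T equals the identity matrix. -/

import Mathlib

open Finset Polynomial

lemma fact_prod (x n : ℕ) :
    (x.factorial : ℝ) * ∏ t ∈ Finset.range n, ((x:ℝ) + t + 1) = ((x+n).factorial : ℝ) := by
  induction n with
  | zero => simp
  | succ n ih =>
      rw [prod_range_succ, ← mul_assoc, ih, show x + (n+1) = (x+n)+1 from rfl,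
        Nat.factorial_succ]
      push_cast; ring

lemma nat_prod_sub (j : ℕ) : ∏ t ∈ Finset.range j, (j - t) = j.factorial := by
  rw [← Finset.prod_range_reflect]
  rw [Finset.prod_congr rfl (fun t ht => by
    simp only [Finset.mem_range] at ht; omega : ∀ t ∈ Finset.range j, j - (j-1-t) = t+1)]
  exact Finset.prod_range_add_one_eq_factorial j

lemma prod_range_sub' (j : ℕ) : ∏ t ∈ Finset.range j, ((t:ℝ) - (j:ℝ)) = (-1)^j * (j.factorial : ℝ) := by
  have : ∀ t ∈ Finset.range j, ((t:ℝ) - j) = (-1) * ((j - t : ℕ) : ℝ) := by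
    intro t ht
    simp only [Finset.mem_range] at ht
    rw [Nat.cast_sub ht.le]; ring
  rw [Finset.prod_congr rfl this, Finset.prod_mul_distrib, Finset.prod_const, ← Nat.cast_prod,
    nat_prod_sub, Finset.card_range]

lemma erase_sub (n j : ℕ) (hj : j < n) :
    ∏ t ∈ (Finset.range n).erase j, ((t:ℝ) - (j:ℝ)) =
      (-1)^j * (j.factorial : ℝ) * ((n-1-j).factorial : ℝ) := by
  have hsplit : (Finset.range n).erase j = Finset.range j ∪ Finset.Ico (j+1) n := by
    ext t; simp only [Finset.mem_erase, Finset.mem_range, Finset.mem_union, Finset.mem_Ico]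
    omega
  have hdisj : Disjoint (Finset.range j) (Finset.Ico (j+1) n) := by
    simp only [Finset.disjoint_left, Finset.mem_range, Finset.mem_Ico]
    omega
  rw [hsplit, Finset.prod_union hdisj, prod_range_sub']
  have h2 : ∏ t ∈ Finset.Ico (j+1) n, ((t:ℝ) - j) = ((n-1-j).factorial : ℝ) := by
    rw [Finset.prod_Ico_eq_prod_range]
    have : ∀ s ∈ Finset.range (n - (j+1)), (((j+1+s:ℕ):ℝ) - j) = ((s+1 : ℕ) : ℝ) := by
      intro s hs; push_cast; ring
    rw [Finset.prod_congr rfl this, ← Nat.cast_prod]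
    norm_cast
    rw [Finset.prod_range_add_one_eq_factorial]
    congr 1; omega
  rw [h2]

lemma poly_key (n k : ℕ) (hk : k < n) :
    (∑ j ∈ Finset.range n,
      Polynomial.C ((-1:ℝ)^j * ((n-1).choose j : ℝ) * ((n+j).choose j : ℝ) / ((j:ℝ)+(k:ℝ)+1)) *
        ∏ t ∈ (Finset.range n).erase j, (Polynomial.X + Polynomial.C ((t:ℝ)+1)))
    = Polynomial.C ((-1:ℝ)^(n-1) / (n:ℝ)) *
        ∏ t ∈ (Finset.range n).erase k, (Polynomial.X - Polynomial.C (t:ℝ)) := by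
  have hn : 1 ≤ n := by omega
  rw [← sub_eq_zero]
  set L := (∑ j ∈ Finset.range n,
      Polynomial.C ((-1:ℝ)^j * ((n-1).choose j : ℝ) * ((n+j).choose j : ℝ) / ((j:ℝ)+(k:ℝ)+1)) *
        ∏ t ∈ (Finset.range n).erase j, (Polynomial.X + Polynomial.C ((t:ℝ)+1))) with hL
  set R := Polynomial.C ((-1:ℝ)^(n-1) / (n:ℝ)) *
        ∏ t ∈ (Finset.range n).erase k, (Polynomial.X - Polynomial.C (t:ℝ)) with hR
  have hinj : Set.InjOn (fun j : ℕ => -((j:ℝ)+1)) (Finset.range n) := by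
    intro a _ b _ h
    simp only at h
    have : (a:ℝ) = b := by linarith
    exact_mod_cast this
  apply Polynomial.eq_zero_of_natDegree_lt_card_of_eval_eq_zero' _
    ((Finset.range n).image (fun j : ℕ => -((j:ℝ)+1)))
  · -- evaluations
    intro x hx
    simp only [Finset.mem_image, Finset.mem_range] at hx
    obtain ⟨j, hj, rfl⟩ := hx
    rw [Polynomial.eval_sub, hL, hR]
    rw [Polynomial.eval_finset_sum]
    have hterm : ∀ j' ∈ Finset.range n, j' ≠ j →
        (Polynomial.C ((-1:ℝ)^j' * ((n-1).choose j' : ℝ) * ((n+j').choose j' : ℝ) / ((j':ℝ)+(k:ℝ)+1)) *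
          ∏ t ∈ (Finset.range n).erase j', (Polynomial.X + Polynomial.C ((t:ℝ)+1))).eval (-((j:ℝ)+1)) = 0 := by
      intro j' _ hne
      rw [Polynomial.eval_mul, Polynomial.eval_prod]
      apply mul_eq_zero_of_right
      apply Finset.prod_eq_zero (i := j)
      · exact Finset.mem_erase.mpr ⟨fun h => hne h.symm, Finset.mem_range.mpr hj⟩
      · simp only [Polynomial.eval_add, Polynomial.eval_X, Polynomial.eval_C]; ring
    rw [Finset.sum_eq_single j (fun j' hj' hne => hterm j' hj' hne)
      (fun h => absurd (Finset.mem_range.mpr hj) h)]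
    rw [Polynomial.eval_mul, Polynomial.eval_prod, Polynomial.eval_C, Polynomial.eval_mul,
      Polynomial.eval_prod, Polynomial.eval_C]
    have e1 : ∀ t ∈ (Finset.range n).erase j,
        (Polynomial.X + Polynomial.C ((t:ℝ)+1)).eval (-((j:ℝ)+1)) = (t:ℝ) - j := by
      intro t _; simp; ring
    have e2 : ∀ t ∈ (Finset.range n).erase k,
        (Polynomial.X - Polynomial.C ((t:ℝ))).eval (-((j:ℝ)+1)) = (-1) * ((j:ℝ) + t + 1) := by
      intro t _; simp; ring
    rw [Finset.prod_congr rfl e1, Finset.prod_congr rfl e2, erase_sub n j hj,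
      Finset.prod_mul_distrib, Finset.prod_const]
    have hcard : ((Finset.range n).erase k).card = n - 1 := by
      rw [Finset.card_erase_of_mem (Finset.mem_range.mpr hk), Finset.card_range]
    rw [hcard]
    -- now pure scalar identity
    have hprodfull : ((j:ℝ)+(k:ℝ)+1) * ∏ t ∈ (Finset.range n).erase k, ((j:ℝ) + t + 1)
        = ((j+n).factorial : ℝ) / (j.factorial : ℝ) := by
      have := Finset.mul_prod_erase (Finset.range n) (fun t => ((j:ℝ) + t + 1))
        (Finset.mem_range.mpr hk)
      rw [eq_div_iff (by positivity : (j.factorial : ℝ) ≠ 0)]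
      have h2 := fact_prod j n
      calc ((j:ℝ)+(k:ℝ)+1) * (∏ t ∈ (Finset.range n).erase k, ((j:ℝ) + t + 1)) * (j.factorial:ℝ)
          = (∏ t ∈ Finset.range n, ((j:ℝ) + t + 1)) * (j.factorial:ℝ) := by rw [← this]
        _ = ((j+n).factorial : ℝ) := by rw [mul_comm]; exact h2
    -- key factorial identities
    have hjn : j ≤ n - 1 := by omega
    have f1 : ((n-1).choose j : ℝ) * (j.factorial:ℝ) * ((n-1-j).factorial:ℝ) = ((n-1).factorial:ℝ) := by
      exact_mod_cast congrArg (Nat.cast (R := ℝ)) (Nat.choose_mul_factorial_mul_factorial hjn)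
    have f2 : ((n+j).choose j : ℝ) * ((n:ℕ).factorial:ℝ) * (j.factorial:ℝ) = ((n+j).factorial:ℝ) := by
      exact_mod_cast congrArg (Nat.cast (R := ℝ)) (Nat.add_choose_mul_factorial_mul_factorial n j)
    have f2' : (n:ℝ) * ((n-1).factorial:ℝ) = ((n:ℕ).factorial:ℝ) := by
      have : n * (n-1).factorial = n.factorial := by
        cases n with
        | zero => omega
        | succ m => simp [Nat.factorial_succ]
      exact_mod_cast this
    have hjk : ((j:ℝ)+(k:ℝ)+1) ≠ 0 := by positivity
    have hnn : (n:ℝ) ≠ 0 := by positivity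
    have hjf : (j.factorial : ℝ) ≠ 0 := by positivity
    have hjnn : ((j+n).factorial : ℝ) = ((n+j).factorial : ℝ) := by rw [Nat.add_comm]
    -- goal: c_j * ((-1)^j * j! * (n-1-j)!) - ((-1)^(n-1)/n) * ((-1)^(n-1) * prod) = 0
    have hprod : ∏ t ∈ (Finset.range n).erase k, ((j:ℝ) + t + 1)
        = ((j+n).factorial : ℝ) / ((j.factorial : ℝ) * ((j:ℝ)+(k:ℝ)+1)) := by
      field_simp at hprodfull ⊢
      linarith [hprodfull]
    rw [hprod, hjnn]
    have hsq : ((-1:ℝ))^(n-1) * (-1:ℝ)^(n-1) = 1 := by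
      rw [← pow_add]; exact Even.neg_one_pow ⟨n-1, rfl⟩
    have hp2j : ((-1:ℝ))^j * (-1:ℝ)^j = 1 := by
      rw [← pow_add]; exact Even.neg_one_pow ⟨j, rfl⟩
    have hbig : ((n-1).choose j : ℝ) * ((n+j).choose j : ℝ) * (j.factorial:ℝ) *
        ((n-1-j).factorial:ℝ) * (n:ℝ) * (j.factorial:ℝ) = ((n+j).factorial:ℝ) := by
      linear_combination (((n+j).choose j : ℝ) * (n:ℝ) * (j.factorial:ℝ)) * f1 +
        (((n+j).choose j : ℝ) * (j.factorial:ℝ)) * f2' + f2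
    rw [sub_eq_zero]
    field_simp
    linear_combination (((n-1).choose j : ℝ) * ((n+j).choose j : ℝ) * (j.factorial:ℝ) *
        ((n-1-j).factorial:ℝ) * (n:ℝ) * (j.factorial:ℝ)) * hp2j +
      hbig - ((n+j).factorial:ℝ) * hsq
  · -- degree
    rw [Finset.card_image_of_injOn hinj, Finset.card_range]
    have hdeg : ∀ p ∈ [L, R].toFinset, True := fun _ _ => trivial
    have hL' : L.natDegree ≤ n - 1 := by
      apply Polynomial.natDegree_sum_le_of_forall_le
      intro j hj
      apply (Polynomial.natDegree_C_mul_le _ _).trans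
      apply (Polynomial.natDegree_prod_le _ _).trans
      calc ∑ t ∈ (Finset.range n).erase j, (Polynomial.X + Polynomial.C ((t:ℝ)+1)).natDegree
          ≤ ∑ t ∈ (Finset.range n).erase j, 1 := by
            apply Finset.sum_le_sum; intro t _; rw [Polynomial.natDegree_X_add_C]
        _ = ((Finset.range n).erase j).card := by simp
        _ ≤ n - 1 := by
            rw [Finset.card_erase_of_mem (Finset.mem_range.mpr (Finset.mem_range.mp hj)),
              Finset.card_range]
    have hR' : R.natDegree ≤ n - 1 := by
      apply (Polynomial.natDegree_C_mul_le _ _).trans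
      apply (Polynomial.natDegree_prod_le _ _).trans
      calc ∑ t ∈ (Finset.range n).erase k, (Polynomial.X - Polynomial.C ((t:ℝ))).natDegree
          ≤ ∑ t ∈ (Finset.range n).erase k, 1 := by
            apply Finset.sum_le_sum; intro t _; rw [Polynomial.natDegree_X_sub_C]
        _ = ((Finset.range n).erase k).card := by simp
        _ = n - 1 := by rw [Finset.card_erase_of_mem (Finset.mem_range.mpr hk), Finset.card_range]
    calc (L - R).natDegree ≤ max L.natDegree R.natDegree := Polynomial.natDegree_sub_le L R
      _ ≤ n - 1 := max_le hL' hR'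
      _ < n := by omega

lemma sum_key (n k i : ℕ) (hk : k < n) :
    ∑ j ∈ Finset.range n, ((-1:ℝ)^j * ((n-1).choose j : ℝ) * ((n+j).choose j : ℝ)) /
        ((((i:ℝ)+(j:ℝ)+1)) * (((j:ℝ)+(k:ℝ)+1)))
    = ((-1:ℝ)^(n-1) / (n:ℝ)) * (∏ t ∈ (Finset.range n).erase k, ((i:ℝ) - (t:ℝ))) *
        (i.factorial : ℝ) / ((i+n).factorial : ℝ) := by
  have h := congrArg (Polynomial.eval (i:ℝ)) (poly_key n k hk)
  simp only [Polynomial.eval_finset_sum, Polynomial.eval_mul, Polynomial.eval_C,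
    Polynomial.eval_prod, Polynomial.eval_add, Polynomial.eval_sub, Polynomial.eval_X] at h
  have hif : (i.factorial : ℝ) ≠ 0 := by positivity
  have hinf : ((i+n).factorial : ℝ) ≠ 0 := by positivity
  have hterm : ∀ j ∈ Finset.range n,
      ((-1:ℝ)^j * ((n-1).choose j : ℝ) * ((n+j).choose j : ℝ) / ((j:ℝ)+(k:ℝ)+1)) *
        ∏ t ∈ (Finset.range n).erase j, ((i:ℝ) + ((t:ℝ)+1))
      = (((-1:ℝ)^j * ((n-1).choose j : ℝ) * ((n+j).choose j : ℝ)) /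
          ((((i:ℝ)+(j:ℝ)+1)) * (((j:ℝ)+(k:ℝ)+1)))) * (((i+n).factorial : ℝ) / (i.factorial : ℝ)) := by
    intro j hj
    have hmem : j ∈ Finset.range n := hj
    have hp := Finset.mul_prod_erase (Finset.range n) (fun t => ((i:ℝ) + (t:ℝ) + 1)) hmem
    have hfp := fact_prod i n
    have hij : ((i:ℝ)+(j:ℝ)+1) ≠ 0 := by positivity
    have hjk : ((j:ℝ)+(k:ℝ)+1) ≠ 0 := by positivity
    have hpe : ∏ t ∈ (Finset.range n).erase j, ((i:ℝ) + ((t:ℝ)+1))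
        = ((i+n).factorial : ℝ) / ((i.factorial : ℝ) * ((i:ℝ)+(j:ℝ)+1)) := by
      rw [eq_div_iff (by positivity)]
      have : ∏ t ∈ (Finset.range n).erase j, ((i:ℝ) + ((t:ℝ)+1))
          = ∏ t ∈ (Finset.range n).erase j, ((i:ℝ) + (t:ℝ) + 1) := by
        apply Finset.prod_congr rfl; intro t _; ring
      rw [this]
      calc (∏ t ∈ (Finset.range n).erase j, ((i:ℝ) + (t:ℝ) + 1)) * ((i.factorial:ℝ) * ((i:ℝ)+(j:ℝ)+1))
          = (i.factorial:ℝ) * (((i:ℝ)+(j:ℝ)+1) * ∏ t ∈ (Finset.range n).erase j, ((i:ℝ) + (t:ℝ) + 1)) := by ring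
        _ = (i.factorial:ℝ) * ∏ t ∈ Finset.range n, ((i:ℝ) + (t:ℝ) + 1) := by rw [← hp]
        _ = ((i+n).factorial : ℝ) := hfp
    rw [hpe]
    rw [div_mul_div_comm, div_mul_div_comm]
    ring
  rw [Finset.sum_congr rfl hterm, ← Finset.sum_mul] at h
  have h2 := congrArg (fun x => x * (i.factorial:ℝ)) h
  rw [mul_assoc, div_mul_cancel₀ _ hif] at h2
  rw [eq_div_iff hinf]
  linear_combination h2

theorem stmt_3 (n : ℕ) (hn : 1 ≤ n) (S T : Matrix (Fin n) (Fin n) ℝ)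
    (hS : ∀ i j : Fin n, S i j =
      (-1 : ℝ) ^ (i.val + j.val + 1) /
        ((i.val.factorial : ℝ) * (j.val.factorial : ℝ) * ((i.val : ℝ) + (j.val : ℝ) + 1)))
    (hT : ∀ i j : Fin n, T i j =
      -(1 / ((i.val : ℝ) + (j.val : ℝ) + 1)) *
        ((n + i.val).choose i.val : ℝ) * ((n + j.val).choose j.val : ℝ) *
        ((n.factorial : ℝ)) ^ 2 /
        (((n - 1 - i.val).factorial : ℝ) * ((n - 1 - j.val).factorial : ℝ))) :
    S * T = 1 := by
  ext i k
  rw [Matrix.mul_apply, Matrix.one_apply]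
  set A : ℝ := (-1:ℝ)^(i.val) * n * ((n + k.val).choose k.val : ℝ) * (n.factorial:ℝ) /
      ((i.val.factorial:ℝ) * ((n-1-k.val).factorial:ℝ)) with hA
  have hterm : ∀ j : Fin n, S i j * T j k
      = A * (((-1:ℝ)^(j.val) * ((n-1).choose j.val : ℝ) * ((n+j.val).choose j.val : ℝ)) /
          ((((i.val:ℝ))+((j.val:ℝ))+1) * (((j.val:ℝ))+((k.val:ℝ))+1))) := by
    intro j
    rw [hS i j, hT j k, hA]
    have hjm : j.val ≤ n - 1 := by omega
    have hf : ((n-1).choose j.val : ℝ) * (j.val.factorial:ℝ) * ((n-1-j.val).factorial:ℝ)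
        = ((n-1).factorial:ℝ) := by
      exact_mod_cast congrArg (Nat.cast (R := ℝ)) (Nat.choose_mul_factorial_mul_factorial hjm)
    have hnf : (n:ℝ) * ((n-1).factorial:ℝ) = (n.factorial:ℝ) := by
      have : n * (n-1).factorial = n.factorial := by
        cases n with
        | zero => omega
        | succ m => simp [Nat.factorial_succ]
      exact_mod_cast this
    have hkey : (n:ℝ) * (((n-1).choose j.val : ℝ) * (j.val.factorial:ℝ) *
        ((n-1-j.val).factorial:ℝ)) = (n.factorial:ℝ) := by
      rw [hf]; exact hnf
    have hpow : (-1:ℝ)^(i.val + j.val + 1) = -((-1:ℝ)^(i.val) * (-1:ℝ)^(j.val)) := by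
      rw [pow_succ, pow_add]; ring
    have h1 : (i.val.factorial:ℝ) ≠ 0 := by exact_mod_cast (Nat.factorial_pos _).ne'
    have h2 : (j.val.factorial:ℝ) ≠ 0 := by exact_mod_cast (Nat.factorial_pos _).ne'
    have h3 : ((n-1-j.val).factorial:ℝ) ≠ 0 := by exact_mod_cast (Nat.factorial_pos _).ne'
    have h4 : ((n-1-k.val).factorial:ℝ) ≠ 0 := by exact_mod_cast (Nat.factorial_pos _).ne'
    have h5 : ((i.val:ℝ))+((j.val:ℝ))+1 ≠ 0 := by positivity
    have h6 : ((j.val:ℝ))+((k.val:ℝ))+1 ≠ 0 := by positivity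
    rw [hpow]
    field_simp
    linear_combination (-(((n+j.val).choose j.val:ℝ) *
      ((n+k.val).choose k.val:ℝ))) * hkey
  rw [Finset.sum_congr rfl (fun j _ => hterm j), ← Finset.mul_sum]
  have hconv : ∑ j : Fin n, (((-1:ℝ)^(j.val) * ((n-1).choose j.val : ℝ) * ((n+j.val).choose j.val : ℝ)) /
          ((((i.val:ℝ))+((j.val:ℝ))+1) * (((j.val:ℝ))+((k.val:ℝ))+1)))
      = ∑ j ∈ Finset.range n, (((-1:ℝ)^j * ((n-1).choose j : ℝ) * ((n+j).choose j : ℝ)) /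
          ((((i.val:ℝ))+((j:ℝ))+1) * (((j:ℝ))+((k.val:ℝ))+1))) :=
    Fin.sum_univ_eq_sum_range (fun j : ℕ => ((-1:ℝ)^j * ((n-1).choose j : ℝ) *
      ((n+j).choose j : ℝ)) / ((((i.val:ℝ))+((j:ℝ))+1) * (((j:ℝ))+((k.val:ℝ))+1))) n
  rw [hconv, sum_key n k.val i.val k.isLt]
  by_cases hik : i = k
  · subst hik
    rw [if_pos rfl]
    have hP : ∏ t ∈ (Finset.range n).erase i.val, ((i.val:ℝ) - (t:ℝ))
        = (-1:ℝ)^(n-1) * ((-1:ℝ)^(i.val) * (i.val.factorial : ℝ) * ((n-1-i.val).factorial : ℝ)) := by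
      have : ∀ t ∈ (Finset.range n).erase i.val, ((i.val:ℝ) - t) = (-1) * ((t:ℝ) - i.val) := by
        intro t _; ring
      rw [Finset.prod_congr rfl this, Finset.prod_mul_distrib, Finset.prod_const,
        Finset.card_erase_of_mem (Finset.mem_range.mpr i.isLt), Finset.card_range,
        erase_sub n i.val i.isLt]
    rw [hP, hA]
    have hsq : ((-1:ℝ))^(n-1) * (-1:ℝ)^(n-1) = 1 := by
      rw [← pow_add]; exact Even.neg_one_pow ⟨n-1, rfl⟩
    have hsqi : ((-1:ℝ))^(i.val) * (-1:ℝ)^(i.val) = 1 := by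
      rw [← pow_add]; exact Even.neg_one_pow ⟨i.val, rfl⟩
    have hcf : ((n + i.val).choose i.val : ℝ) * (n.factorial:ℝ) * (i.val.factorial:ℝ)
        = ((n+i.val).factorial:ℝ) := by
      exact_mod_cast congrArg (Nat.cast (R := ℝ)) (Nat.add_choose_mul_factorial_mul_factorial n i.val)
    have h1 : (i.val.factorial:ℝ) ≠ 0 := by exact_mod_cast (Nat.factorial_pos _).ne'
    have h4 : ((n-1-i.val).factorial:ℝ) ≠ 0 := by exact_mod_cast (Nat.factorial_pos _).ne'
    have h7 : ((i.val+n).factorial:ℝ) ≠ 0 := by exact_mod_cast (Nat.factorial_pos _).ne'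
    have h8 : (n:ℝ) ≠ 0 := by positivity
    have hin : ((i.val+n).factorial:ℝ) = ((n+i.val).factorial:ℝ) := by rw [Nat.add_comm]
    rw [hin] at h7 ⊢
    field_simp
    linear_combination (((n + i.val).choose i.val:ℝ) * (n.factorial:ℝ) *
        (i.val.factorial:ℝ) *
        ((-1:ℝ)^(i.val) * (-1:ℝ)^(i.val))) * hsq +
      (((n + i.val).choose i.val:ℝ) * (n.factorial:ℝ) * (i.val.factorial:ℝ)) * hsqi +
      hcf
  · rw [if_neg hik]
    have hne : i.val ≠ k.val := fun h => hik (Fin.val_injective h)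
    have hP : ∏ t ∈ (Finset.range n).erase k.val, ((i.val:ℝ) - (t:ℝ)) = 0 := by
      apply Finset.prod_eq_zero (i := i.val)
      · exact Finset.mem_erase.mpr ⟨hne, Finset.mem_range.mpr i.isLt⟩
      · ring
    rw [hP]
    ring
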